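/- arXiv:2601.03842 — 4 statements merged into one kernel-verified Lean document; each statement's English description precedes it below -/
import Mathlib

section
/- Let f : (A → Bool) → (A → Bool). Call a three-valued interpretation I a trap space for f if for every J ∈ C(I), f J ∈ C(I). If (E i)_{i ∈ ι} is a nonempty chain of trap spaces with respect to the pointwise order ≤ₛ (i.e., totally ordered: for all i j, E i ≤ₛ E j or E j ≤ₛ E i), then there exists a trap space I such that C(I) = ⋂ᵢ C(E i) and I ≤ₛ E i for every i. -/
def leS (x y : Option Bool) : Prop := x = y ∨ y = none

def leSI {A : Type*} (I₁ I₂ : A → Option Bool) : Prop := ∀ a, leS (I₁ a) (I₂ a)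

def cube {A : Type*} (I : A → Option Bool) : Set (A → Bool) :=
  {J | ∀ a (b : Bool), I a = some b → J a = b}


def IsTrapSpace {A : Type*} (f : (A → Bool) → (A → Bool)) (I : A → Option Bool) : Prop :=
  ∀ J ∈ cube I, f J ∈ cube I

theorem stmt_3 {A : Type*} {ι : Type*} [Nonempty ι] (f : (A → Bool) → (A → Bool))
    (E : ι → (A → Option Bool)) (htrap : ∀ i, IsTrapSpace f (E i))
    (hchain : ∀ i j, leSI (E i) (E j) ∨ leSI (E j) (E i)) :
    ∃ I : A → Option Bool, IsTrapSpace f I ∧ cube I = ⋂ i, cube (E i) ∧ ∀ i, leSI I (E i) := by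
  classical
  -- consistency: any two defined values at the same point agree
  have hcons : ∀ a (b b' : Bool) i j, E i a = some b → E j a = some b' → b = b' := by
    intro a b b' i j hi hj
    rcases hchain i j with h | h
    · rcases h a with h' | h'
      · rw [hi, hj] at h'; exact Option.some.inj h'
      · rw [h'] at hj; cases hj
    · rcases h a with h' | h'
      · rw [hi, hj] at h'; exact (Option.some.inj h').symm
      · rw [h'] at hi; cases hi
  set I : A → Option Bool := fun a =>
    if h : ∃ b : Bool, ∃ i, E i a = some b then some h.choose else none with hI
  have hIsome : ∀ a (b : Bool), I a = some b ↔ ∃ i, E i a = some b := by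
    intro a b
    constructor
    · intro h
      by_cases hex : ∃ b : Bool, ∃ i, E i a = some b
      · simp only [hI, dif_pos hex] at h
        obtain ⟨i, hi⟩ := hex.choose_spec
        exact ⟨i, (Option.some.inj h) ▸ hi⟩
      · simp only [hI, dif_neg hex] at h
        cases h
    · rintro ⟨i, hi⟩
      have hex : ∃ b : Bool, ∃ i, E i a = some b := ⟨b, i, hi⟩
      obtain ⟨j, hj⟩ := hex.choose_spec
      simp only [hI, dif_pos hex]
      exact congrArg some (hcons a _ b j i hj hi)
  have hcube : cube I = ⋂ i, cube (E i) := by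
    ext J
    simp only [Set.mem_iInter, cube, Set.mem_setOf_eq]
    constructor
    · intro h i a b hab
      exact h a b ((hIsome a b).mpr ⟨i, hab⟩)
    · intro h a b hab
      obtain ⟨i, hi⟩ := (hIsome a b).mp hab
      exact h i a b hi
  refine ⟨I, ?_, hcube, ?_⟩
  · intro J hJ
    rw [hcube] at hJ ⊢
    simp only [Set.mem_iInter] at hJ ⊢
    intro i
    exact htrap i J (hJ i)
  · intro i a
    cases hE : E i a with
    | none => exact Or.inr rfl
    | some b => exact Or.inl ((hIsome a b).mpr ⟨i, hE⟩)
end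

section
/- Let f : (A → Bool) → (A → Bool) and let S be a nonempty set of two-valued interpretations. Then there exists a unique three-valued interpretation I such that: (i) I is a trap space for f, (ii) S ⊆ C(I), and (iii) I is ≤ₛ-minimal with these properties, i.e., every trap space I' with S ⊆ C(I') satisfies I ≤ₛ I'. -/
theorem stmt_6 {A : Type*} (f : (A → Bool) → (A → Bool)) (S : Set (A → Bool))
    (hS : S.Nonempty) :
    ∃! I : A → Option Bool, IsTrapSpace f I ∧ S ⊆ cube I ∧
      ∀ I' : A → Option Bool, IsTrapSpace f I' → S ⊆ cube I' → leSI I I' := by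
  classical
  obtain ⟨J₀, hJ₀⟩ := hS
  set P : A → Prop := fun a =>
    ∃ I' : A → Option Bool, IsTrapSpace f I' ∧ S ⊆ cube I' ∧ I' a ≠ none with hP
  set I : A → Option Bool := fun a => if P a then some (J₀ a) else none with hI
  -- key fact: cube I is the intersection of cubes of trap spaces containing S
  have hcube : ∀ J, J ∈ cube I ↔
      ∀ I' : A → Option Bool, IsTrapSpace f I' → S ⊆ cube I' → J ∈ cube I' := by
    intro J
    constructor
    · intro hJ I' hI' hSI' a b hab
      have hPa : P a := ⟨I', hI', hSI', by simp [hab]⟩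
      have : I a = some (J₀ a) := by simp [hI, hPa]
      have hJa : J a = J₀ a := hJ a (J₀ a) this
      have : J₀ a = b := hSI' hJ₀ a b hab
      rw [hJa, this]
    · intro h a b hab
      have hPa : P a := by
        by_contra hc
        simp [hI, hc] at hab
      obtain ⟨I', hI', hSI', hne⟩ := hPa
      obtain ⟨b', hb'⟩ := Option.ne_none_iff_exists'.mp hne
      have h1 : J a = b' := h I' hI' hSI' a b' hb'
      have h2 : J₀ a = b' := hSI' hJ₀ a b' hb'
      have : I a = some (J₀ a) := by
        simp only [hI]
        rw [if_pos ⟨I', hI', hSI', hne⟩]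
      rw [this] at hab
      rw [h1, ← h2, Option.some_inj.mp hab]
  have htrap : IsTrapSpace f I := by
    intro J hJ
    rw [hcube] at hJ ⊢
    intro I' hI' hSI'
    exact hI' J (hJ I' hI' hSI')
  have hsub : S ⊆ cube I := by
    intro J hJ
    rw [hcube]
    intro I' hI' hSI'
    exact hSI' hJ
  have hmin : ∀ I' : A → Option Bool, IsTrapSpace f I' → S ⊆ cube I' → leSI I I' := by
    intro I' hI' hSI' a
    cases hIa : I' a with
    | none => exact Or.inr rfl
    | some b =>
      left
      have hPa : P a := ⟨I', hI', hSI', by simp [hIa]⟩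
      have h2 : J₀ a = b := hSI' hJ₀ a b hIa
      simp [hI, hPa, hIa, h2]
  refine ⟨I, ⟨htrap, hsub, hmin⟩, ?_⟩
  rintro I₂ ⟨ht₂, hs₂, hm₂⟩
  funext a
  have h1 := hm₂ I htrap hsub a
  have h2 := hmin I₂ ht₂ hs₂ a
  rcases h1 with h1 | h1
  · exact h1
  · rcases h2 with h2 | h2
    · exact h2.symm
    · rw [h1, h2]
end

section
/- Let f : (A → Bool) → (A → Bool) and let I₁, I₂ be two distinct ≤ₛ-minimal trap spaces for f. Then C(I₁) ∩ C(I₂) = ∅. -/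
theorem stmt_7 {A : Type*} (f : (A → Bool) → (A → Bool)) (I₁ I₂ : A → Option Bool)
    (h₁ : IsTrapSpace f I₁) (h₂ : IsTrapSpace f I₂)
    (hmin₁ : ∀ I'', IsTrapSpace f I'' → leSI I'' I₁ → I'' = I₁)
    (hmin₂ : ∀ I'', IsTrapSpace f I'' → leSI I'' I₂ → I'' = I₂)
    (hne : I₁ ≠ I₂) :
    cube I₁ ∩ cube I₂ = ∅ := by
  by_contra h
  obtain ⟨J, hJ₁, hJ₂⟩ := Set.nonempty_iff_ne_empty.2 h
  set I'' : A → Option Bool := fun a => match I₁ a with | some b => some b | none => I₂ a with hI''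
  -- consistency
  have hcons : ∀ a b b', I₁ a = some b → I₂ a = some b' → b = b' := by
    intro a b b' hb hb'
    rw [← hJ₁ a b hb, ← hJ₂ a b' hb']
  have hsub₁ : cube I'' ⊆ cube I₁ := by
    intro K hK a b hb
    exact hK a b (by simp [hI'', hb])
  have hsub₂ : cube I'' ⊆ cube I₂ := by
    intro K hK a b hb
    cases h1 : I₁ a with
    | none => exact hK a b (by simp [hI'', h1, hb])
    | some b' =>
      rw [hcons a b' b h1 hb] at h1
      exact hK a b (by simp [hI'', h1])
  have htrap : IsTrapSpace f I'' := by
    intro K hK a b hb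
    simp only [hI''] at hb
    cases h1 : I₁ a with
    | some b' =>
      rw [h1] at hb; simp at hb; subst hb
      exact h₁ K (hsub₁ hK) a b' h1
    | none =>
      rw [h1] at hb; simp at hb
      exact h₂ K (hsub₂ hK) a b hb
  have hle₁ : leSI I'' I₁ := by
    intro a
    cases h1 : I₁ a with
    | none => exact Or.inr rfl
    | some b => exact Or.inl (by simp [hI'', h1])
  have hle₂ : leSI I'' I₂ := by
    intro a
    cases h1 : I₁ a with
    | none => exact Or.inl (by simp [hI'', h1])
    | some b =>
      cases h2 : I₂ a with
      | none => exact Or.inr rfl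
      | some b' =>
        exact Or.inl (by simp [hI'', h1, hcons a b b' h1 h2])
  exact hne ((hmin₁ I'' htrap hle₁).symm.trans (hmin₂ I'' htrap hle₂))
end

section
/- Let A be a type, f : (A → Bool) → (A → Bool), and R : (A → Option Bool) → (A → Option Bool). Assume: (i) R is monotone with respect to the pointwise order ≤ₛ (I₁ ≤ₛ I₂ → R I₁ ≤ₛ R I₂), and (ii) R extends f on two-valued interpretations, i.e., for every J : A → Bool, R (some ∘ J) = some ∘ (f J). If a three-valued interpretation I satisfies R I ≤ₛ I, then I is a trap space for f: for every J ∈ C(I), f J ∈ C(I). -/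
theorem stmt_13 {A : Type*} (f : (A → Bool) → (A → Bool))
    (R : (A → Option Bool) → (A → Option Bool))
    (hmono : ∀ I₁ I₂, leSI I₁ I₂ → leSI (R I₁) (R I₂))
    (hext : ∀ J : A → Bool, R (fun a => some (J a)) = fun a => some (f J a))
    (I : A → Option Bool) (hI : leSI (R I) I) :
    IsTrapSpace f I := by
  intro J hJ a b hb
  have hle : leSI (fun a => some (J a)) I := by
    intro a
    cases h : I a with
    | none => exact Or.inr rfl
    | some c => exact Or.inl (by simp [hJ a c h])
  have h1 := hmono _ _ hle a
  rw [hext J] at h1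
  simp only at h1
  have h2 := hI a
  rcases h1 with h1 | h1 <;> rcases h2 with h2 | h2 <;> simp_all [leS]
end
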